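/- Let q ≥ 1 and let B₁₁, B₂₁ be q-by-q real upper bidiagonal matrices and B₁₂, B₂₂ be q-by-q real lower bidiagonal matrices such that the 2q-by-2q matrix [[B₁₁, B₁₂], [B₂₁, B₂₂]] is orthogonal. Then there exist diagonal signature matrices D₁, D₂, E₁, E₂ (q-by-q) and angles θ ∈ [0, π/2]^q, φ ∈ [0, π/2]^{q−1} such that diag(D₁, D₂) · [[B₁₁, B₁₂], [B₂₁, B₂₂]] · diag(E₁, E₂) = [[B₁₁(θ,φ), B₁₂(θ,φ)], [B₂₁(θ,φ), B₂₂(θ,φ)]], i.e., the sign-adjusted matrix is in bidiagonal block form. -/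

import Mathlib

open Matrix

/-- `B₁₁(θ,φ)`: upper bidiagonal, `(i,i)` entry `cos θᵢ · cos φᵢ₋₁` (with the
convention `cos φ₀ = 1`, 1-based indexing), `(i,i+1)` entry `−sin θᵢ · sin φᵢ`. -/
noncomputable def bdbB11 (q : ℕ) (θ : Fin q → ℝ) (φ : Fin (q - 1) → ℝ) :
    Matrix (Fin q) (Fin q) ℝ :=
  fun i j =>
    if j.val = i.val then
      Real.cos (θ i) *
        (if h : 0 < i.val then Real.cos (φ ⟨i.val - 1, by have := i.isLt; omega⟩) else 1)
    else if h : j.val = i.val + 1 then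
      -(Real.sin (θ i) * Real.sin (φ ⟨i.val, by have := j.isLt; omega⟩))
    else 0

/-- `B₁₂(θ,φ)`: lower bidiagonal, `(i,i)` entry `sin θᵢ · cos φᵢ` for `i < q`,
`(q,q)` entry `sin θ_q`, and `(i+1,i)` entry `cos θᵢ₊₁ · sin φᵢ` (1-based indexing). -/
noncomputable def bdbB12 (q : ℕ) (θ : Fin q → ℝ) (φ : Fin (q - 1) → ℝ) :
    Matrix (Fin q) (Fin q) ℝ :=
  fun i j =>
    if j.val = i.val then
      Real.sin (θ i) * (if h : i.val < q - 1 then Real.cos (φ ⟨i.val, h⟩) else 1)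
    else if h : i.val = j.val + 1 then
      Real.cos (θ i) * Real.sin (φ ⟨j.val, by have := i.isLt; omega⟩)
    else 0

/-- `B₂₁(θ,φ)`: upper bidiagonal, `(i,i)` entry `−sin θᵢ · cos φᵢ₋₁` (with the
convention `cos φ₀ = 1`), `(i,i+1)` entry `−cos θᵢ · sin φᵢ` (1-based indexing). -/
noncomputable def bdbB21 (q : ℕ) (θ : Fin q → ℝ) (φ : Fin (q - 1) → ℝ) :
    Matrix (Fin q) (Fin q) ℝ :=
  fun i j =>
    if j.val = i.val then
      -(Real.sin (θ i) *
        (if h : 0 < i.val then Real.cos (φ ⟨i.val - 1, by have := i.isLt; omega⟩) else 1))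
    else if h : j.val = i.val + 1 then
      -(Real.cos (θ i) * Real.sin (φ ⟨i.val, by have := j.isLt; omega⟩))
    else 0

/-- `B₂₂(θ,φ)`: lower bidiagonal, `(i,i)` entry `cos θᵢ · cos φᵢ` for `i < q`,
`(q,q)` entry `cos θ_q`, and `(i+1,i)` entry `−sin θᵢ₊₁ · sin φᵢ` (1-based indexing). -/
noncomputable def bdbB22 (q : ℕ) (θ : Fin q → ℝ) (φ : Fin (q - 1) → ℝ) :
    Matrix (Fin q) (Fin q) ℝ :=
  fun i j =>
    if j.val = i.val then
      Real.cos (θ i) * (if h : i.val < q - 1 then Real.cos (φ ⟨i.val, h⟩) else 1)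
    else if h : i.val = j.val + 1 then
      -(Real.sin (θ i) * Real.sin (φ ⟨j.val, by have := i.isLt; omega⟩))
    else 0

noncomputable def bdbSgn (x : ℝ) : ℝ := if x < 0 then -1 else 1

lemma bdbSgn_cases (x : ℝ) : bdbSgn x = 1 ∨ bdbSgn x = -1 := by
  unfold bdbSgn; split <;> simp

lemma bdbSgn_sq (x : ℝ) : bdbSgn x ^ 2 = 1 := by
  rcases bdbSgn_cases x with h | h <;> rw [h] <;> norm_num

lemma bdbSgn_mul_self (x : ℝ) : bdbSgn x * x = |x| := by
  unfold bdbSgn; rcases lt_trichotomy x 0 with h | h | h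
  · rw [if_pos h, abs_of_neg h]; ring
  · simp [h]
  · rw [if_neg (not_lt.2 h.le), abs_of_pos h]; ring

lemma bdbSgn_mul_abs (x : ℝ) : bdbSgn x * |x| = x := by
  unfold bdbSgn; rcases lt_trichotomy x 0 with h | h | h
  · rw [if_pos h, abs_of_neg h]; ring
  · simp [h]
  · rw [if_neg (not_lt.2 h.le), abs_of_pos h]; ring

/-- Cauchy–Schwarz equality in 2D. -/
lemma bdb_par2 {x y t u w : ℝ} (hx : x^2 + y^2 = t^2) (huw : u^2 + w^2 = 1)
    (h : u*x + w*y = t) : x = t*u ∧ y = t*w := by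
  have key : (x - t*u)^2 + (y - t*w)^2 = 0 := by
    linear_combination hx + t^2*huw - 2*t*h
  constructor <;> nlinarith [sq_nonneg (x - t*u), sq_nonneg (y - t*w)]

lemma bdb_sq_of_sign_eq {d e x y : ℝ} (hd : d^2 = 1) (he : e^2 = 1)
    (h : d*e*x = y) : x^2 = y^2 := by
  have h2 : (d*e*x)^2 = y^2 := by rw [h]
  calc x^2 = d^2 * e^2 * x^2 := by rw [hd, he]; ring
  _ = y^2 := by rw [← h2]; ring

lemma bdb_mul_of_sign_eq {d e f x y z w : ℝ} (he : e^2 = 1)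
    (h1 : d*e*x = z) (h2 : f*e*y = w) : d*f*(x*y) = z*w := by
  have h3 : (d*e*x)*(f*e*y) = z*w := by rw [h1, h2]
  linear_combination h3 - d*f*x*y*he

/-- sum over a function supported on a pair `{j, j+1}`. -/
lemma bdb_sum_pair {q : ℕ} (j : ℕ) (h : j+1 < q) (f g : Fin q → ℝ)
    (hf : ∀ m : Fin q, m.val ≠ j → m.val ≠ j+1 → f m = 0) :
    ∑ m, f m * g m = f ⟨j, Nat.lt_of_succ_lt h⟩ * g ⟨j, Nat.lt_of_succ_lt h⟩
      + f ⟨j+1, h⟩ * g ⟨j+1, h⟩ := by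
  have hne : (⟨j, Nat.lt_of_succ_lt h⟩ : Fin q) ≠ ⟨j+1, h⟩ := by
    simp [Fin.ext_iff]
  rw [← Finset.sum_pair (f := fun m => f m * g m) hne]
  refine (Finset.sum_subset (Finset.subset_univ _) ?_).symm
  intro m _ hm
  simp only [Finset.mem_insert, Finset.mem_singleton] at hm
  push_neg at hm
  rw [hf m (by simpa [Fin.ext_iff] using hm.1) (by simpa [Fin.ext_iff] using hm.2), zero_mul]

lemma bdb_sum_single {q : ℕ} (i : ℕ) (hi : i < q) (f g : Fin q → ℝ)
    (hf : ∀ m : Fin q, m.val ≠ i → f m = 0) :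
    ∑ m, f m * g m = f ⟨i, hi⟩ * g ⟨i, hi⟩ := by
  rw [← Finset.sum_singleton (fun m => f m * g m) (⟨i, hi⟩ : Fin q)]
  refine (Finset.sum_subset (Finset.subset_univ _) ?_).symm
  intro m _ hm
  simp only [Finset.mem_singleton] at hm
  rw [hf m (by simpa [Fin.ext_iff] using hm), zero_mul]
structure BdbData where
  th : ℝ
  d1 : ℝ
  d2 : ℝ
  ph : ℝ
  e1n : ℝ
  e2 : ℝ

noncomputable def bdbTh (a r cp : ℝ) : ℝ :=
  if cp = 0 then Real.arccos |r| else Real.arccos |a / cp|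

noncomputable def bdbD1 (a r cp e1 e2p : ℝ) : ℝ :=
  if cp = 0 then e2p * bdbSgn r else e1 * bdbSgn a

noncomputable def bdbD2 (g v cp e1 e2p : ℝ) : ℝ :=
  if cp = 0 then -(e2p * bdbSgn v) else -(e1 * bdbSgn g)

noncomputable def bdbPh (a g r v b h cp e1 e2p : ℝ) : ℝ :=
  if Real.sin (bdbTh a r cp) = 0 then Real.arcsin (min 1 |bdbD2 g v cp e1 e2p * h|)
  else Real.arcsin (min 1 |bdbD1 a r cp e1 e2p * b / Real.sin (bdbTh a r cp)|)

noncomputable def bdbE1n (a g r v b h cp e1 e2p : ℝ) : ℝ :=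
  if Real.sin (bdbTh a r cp) = 0 then -bdbSgn (bdbD2 g v cp e1 e2p * h)
  else -bdbSgn (bdbD1 a r cp e1 e2p * b)

noncomputable def bdbE2 (a g r v p u cp e1 e2p : ℝ) : ℝ :=
  if Real.sin (bdbTh a r cp) = 0 then bdbSgn (bdbD2 g v cp e1 e2p * u)
  else bdbSgn (bdbD1 a r cp e1 e2p * p)

/-- One step of the sign/angle extraction. -/
noncomputable def bdbStep (a g r v b p h u cp e1 e2p : ℝ) : BdbData :=
  ⟨bdbTh a r cp, bdbD1 a r cp e1 e2p, bdbD2 g v cp e1 e2p,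
   bdbPh a g r v b h cp e1 e2p, bdbE1n a g r v b h cp e1 e2p, bdbE2 a g r v p u cp e1 e2p⟩

@[simp] lemma bdbStep_th (a g r v b p h u cp e1 e2p : ℝ) :
    (bdbStep a g r v b p h u cp e1 e2p).th = bdbTh a r cp := rfl
@[simp] lemma bdbStep_d1 (a g r v b p h u cp e1 e2p : ℝ) :
    (bdbStep a g r v b p h u cp e1 e2p).d1 = bdbD1 a r cp e1 e2p := rfl
@[simp] lemma bdbStep_d2 (a g r v b p h u cp e1 e2p : ℝ) :
    (bdbStep a g r v b p h u cp e1 e2p).d2 = bdbD2 g v cp e1 e2p := rfl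
@[simp] lemma bdbStep_ph (a g r v b p h u cp e1 e2p : ℝ) :
    (bdbStep a g r v b p h u cp e1 e2p).ph = bdbPh a g r v b h cp e1 e2p := rfl
@[simp] lemma bdbStep_e1n (a g r v b p h u cp e1 e2p : ℝ) :
    (bdbStep a g r v b p h u cp e1 e2p).e1n = bdbE1n a g r v b h cp e1 e2p := rfl
@[simp] lemma bdbStep_e2 (a g r v b p h u cp e1 e2p : ℝ) :
    (bdbStep a g r v b p h u cp e1 e2p).e2 = bdbE2 a g r v p u cp e1 e2p := rfl

lemma bdbStep_th_mem (a g r v b p h u cp e1 e2p : ℝ) :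
    (bdbStep a g r v b p h u cp e1 e2p).th ∈ Set.Icc 0 (Real.pi/2) := by
  unfold bdbStep bdbTh bdbD1 bdbD2 bdbPh bdbE1n bdbE2
  simp only
  constructor
  · split <;> exact Real.arccos_nonneg _
  · have key : ∀ x : ℝ, 0 ≤ x → Real.arccos x ≤ Real.pi/2 := by
      intro x hx
      rw [Real.arccos]
      have := Real.arcsin_nonneg.2 hx
      linarith
    split <;> exact key _ (abs_nonneg _)

lemma bdbSgn_neg_cases (x : ℝ) : -bdbSgn x = 1 ∨ -bdbSgn x = -1 := by
  rcases bdbSgn_cases x with h | h <;> rw [h] <;> norm_num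

lemma bdbStep_ph_mem (a g r v b p h u cp e1 e2p : ℝ) :
    (bdbStep a g r v b p h u cp e1 e2p).ph ∈ Set.Icc 0 (Real.pi/2) := by
  unfold bdbStep bdbTh bdbD1 bdbD2 bdbPh bdbE1n bdbE2
  simp only
  constructor
  · split <;> exact Real.arcsin_nonneg.2 (le_min zero_le_one (abs_nonneg _))
  · split <;> exact Real.arcsin_le_pi_div_two _

lemma bdbStep_sin_nonneg (a g r v b p h u cp e1 e2p : ℝ) :
    0 ≤ Real.sin (bdbStep a g r v b p h u cp e1 e2p).th := by
  have h := bdbStep_th_mem a g r v b p h u cp e1 e2p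
  have hpi := Real.pi_pos
  exact Real.sin_nonneg_of_nonneg_of_le_pi h.1 (by linarith [h.2])

lemma bdbStep_cos_nonneg (a g r v b p h u cp e1 e2p : ℝ) :
    0 ≤ Real.cos (bdbStep a g r v b p h u cp e1 e2p).th := by
  have h := bdbStep_th_mem a g r v b p h u cp e1 e2p
  exact Real.cos_nonneg_of_mem_Icc ⟨by linarith [h.1, Real.pi_pos], h.2⟩

lemma bdbStep_sin_ph_nonneg (a g r v b p h u cp e1 e2p : ℝ) :
    0 ≤ Real.sin (bdbStep a g r v b p h u cp e1 e2p).ph := by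
  have h := bdbStep_ph_mem a g r v b p h u cp e1 e2p
  have hpi := Real.pi_pos
  exact Real.sin_nonneg_of_nonneg_of_le_pi h.1 (by linarith [h.2])

lemma bdbStep_cos_ph_nonneg (a g r v b p h u cp e1 e2p : ℝ) :
    0 ≤ Real.cos (bdbStep a g r v b p h u cp e1 e2p).ph := by
  have h := bdbStep_ph_mem a g r v b p h u cp e1 e2p
  exact Real.cos_nonneg_of_mem_Icc ⟨by linarith [h.1, Real.pi_pos], h.2⟩

lemma bdbStep_d1_cases (a g r v b p h u cp e1 e2p : ℝ)
    (he1 : e1 = 1 ∨ e1 = -1) (he2p : e2p = 1 ∨ e2p = -1) :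
    (bdbStep a g r v b p h u cp e1 e2p).d1 = 1 ∨
    (bdbStep a g r v b p h u cp e1 e2p).d1 = -1 := by
  unfold bdbStep bdbTh bdbD1 bdbD2 bdbPh bdbE1n bdbE2; simp only
  split
  · rcases he2p with h' | h' <;> rcases bdbSgn_cases r with h'' | h'' <;>
      rw [h', h''] <;> norm_num
  · rcases he1 with h' | h' <;> rcases bdbSgn_cases a with h'' | h'' <;>
      rw [h', h''] <;> norm_num

lemma bdbStep_d2_cases (a g r v b p h u cp e1 e2p : ℝ)
    (he1 : e1 = 1 ∨ e1 = -1) (he2p : e2p = 1 ∨ e2p = -1) :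
    (bdbStep a g r v b p h u cp e1 e2p).d2 = 1 ∨
    (bdbStep a g r v b p h u cp e1 e2p).d2 = -1 := by
  unfold bdbStep bdbTh bdbD1 bdbD2 bdbPh bdbE1n bdbE2; simp only
  split
  · rcases he2p with h' | h' <;> rcases bdbSgn_cases v with h'' | h'' <;>
      rw [h', h''] <;> norm_num
  · rcases he1 with h' | h' <;> rcases bdbSgn_cases g with h'' | h'' <;>
      rw [h', h''] <;> norm_num

lemma bdbStep_e1n_cases (a g r v b p h u cp e1 e2p : ℝ) :
    (bdbStep a g r v b p h u cp e1 e2p).e1n = 1 ∨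
    (bdbStep a g r v b p h u cp e1 e2p).e1n = -1 := by
  unfold bdbStep bdbTh bdbD1 bdbD2 bdbPh bdbE1n bdbE2; simp only
  split <;> exact bdbSgn_neg_cases _

lemma bdbStep_e2_cases (a g r v b p h u cp e1 e2p : ℝ) :
    (bdbStep a g r v b p h u cp e1 e2p).e2 = 1 ∨
    (bdbStep a g r v b p h u cp e1 e2p).e2 = -1 := by
  unfold bdbStep bdbTh bdbD1 bdbD2 bdbPh bdbE1n bdbE2; simp only
  split <;> exact bdbSgn_cases _

lemma bdb_sq_one {x : ℝ} (h : x = 1 ∨ x = -1) : x^2 = 1 := by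
  rcases h with h | h <;> rw [h] <;> norm_num

/-- `ph = 0` when the relevant entries vanish. -/
lemma bdbStep_ph_eq_zero (a g r v b p h u cp e1 e2p : ℝ)
    (hb : b = 0) (hh : h = 0) :
    (bdbStep a g r v b p h u cp e1 e2p).ph = 0 := by
  unfold bdbStep bdbTh bdbD1 bdbD2 bdbPh bdbE1n bdbE2; simp only [hb, hh]
  split <;> simp [Real.arcsin_zero]
lemma bdb_abs_eq_one_of_sq {x : ℝ} (h : x^2 = 1) : |x| = 1 := by
  have h1 := abs_nonneg x
  nlinarith [sq_abs x, sq_nonneg (|x| - 1)]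

set_option maxHeartbeats 1600000 in
lemma bdbStep_theta (a g r v b p h u cp sp e1 e2p : ℝ)
    (he1 : e1^2 = 1) (he2p : e2p^2 = 1)
    (hcp : 0 ≤ cp) (hsp : 0 ≤ sp) (hpy : cp^2 + sp^2 = 1)
    (hag : a^2 + g^2 = cp^2) (hrv : r^2 + v^2 = sp^2)
    (ho : e1 * e2p * (a*r + g*v) = sp * cp) :
    (bdbStep a g r v b p h u cp e1 e2p).d1 * e1 * a
        = Real.cos (bdbStep a g r v b p h u cp e1 e2p).th * cp ∧
    (bdbStep a g r v b p h u cp e1 e2p).d2 * e1 * g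
        = -(Real.sin (bdbStep a g r v b p h u cp e1 e2p).th * cp) ∧
    (bdbStep a g r v b p h u cp e1 e2p).d1 * e2p * r
        = Real.cos (bdbStep a g r v b p h u cp e1 e2p).th * sp ∧
    (bdbStep a g r v b p h u cp e1 e2p).d2 * e2p * v
        = -(Real.sin (bdbStep a g r v b p h u cp e1 e2p).th * sp) := by
  set T := bdbStep a g r v b p h u cp e1 e2p with hT
  have hth : T.th = if cp = 0 then Real.arccos |r| else Real.arccos |a / cp| := by
    rw [hT, bdbStep_th, bdbTh]
  have hd1 : T.d1 = if cp = 0 then e2p * bdbSgn r else e1 * bdbSgn a := by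
    rw [hT, bdbStep_d1, bdbD1]
  have hd2 : T.d2 = if cp = 0 then -(e2p * bdbSgn v) else -(e1 * bdbSgn g) := by
    rw [hT, bdbStep_d2, bdbD2]
  clear_value T
  by_cases hc : cp = 0
  · -- degenerate case
    have hth' : T.th = Real.arccos |r| := by rw [hth, if_pos hc]
    have hd1' : T.d1 = e2p * bdbSgn r := by rw [hd1, if_pos hc]
    have hd2' : T.d2 = -(e2p * bdbSgn v) := by rw [hd2, if_pos hc]
    clear hth hd1 hd2
    have ha0 : a = 0 := by nlinarith [sq_nonneg a, sq_nonneg g]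
    have hg0 : g = 0 := by nlinarith [sq_nonneg a, sq_nonneg g]
    have hsp1 : sp = 1 := by nlinarith [sq_nonneg (sp - 1), sq_nonneg (sp + 1)]
    have hr1 : |r| ≤ 1 := by
      have h2 : r^2 ≤ 1 := by nlinarith [sq_nonneg v]
      calc |r| = Real.sqrt (r^2) := (Real.sqrt_sq_eq_abs r).symm
      _ ≤ Real.sqrt 1 := Real.sqrt_le_sqrt h2
      _ = 1 := Real.sqrt_one
    have hcos : Real.cos T.th = |r| := by
      rw [hth']; exact Real.cos_arccos (by linarith [abs_nonneg r]) hr1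
    have hsin : Real.sin T.th = |v| := by
      rw [hth', Real.sin_arccos, show (1:ℝ) - |r|^2 = v^2 by rw [sq_abs]; linear_combination -hrv - (sp+1)*hsp1,
        Real.sqrt_sq_eq_abs]
    refine ⟨by rw [ha0, hc]; ring, by rw [hg0, hc]; ring, ?_, ?_⟩
    · rw [hd1', hcos, hsp1]
      calc e2p * bdbSgn r * e2p * r = e2p^2 * (bdbSgn r * r) := by ring
      _ = |r| * 1 := by rw [he2p, bdbSgn_mul_self]; ring
    · rw [hd2', hsin, hsp1]
      calc -(e2p * bdbSgn v) * e2p * v = -(e2p^2 * (bdbSgn v * v)) := by ring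
      _ = -(|v| * 1) := by rw [he2p, bdbSgn_mul_self]; ring
  · -- main case
    have hcpos : 0 < cp := lt_of_le_of_ne hcp (Ne.symm hc)
    have hth' : T.th = Real.arccos |a / cp| := by rw [hth, if_neg hc]
    have hd1' : T.d1 = e1 * bdbSgn a := by rw [hd1, if_neg hc]
    have hd2' : T.d2 = -(e1 * bdbSgn g) := by rw [hd2, if_neg hc]
    clear hth hd1 hd2
    have haab : |a| ≤ cp := by
      rw [← Real.sqrt_sq_eq_abs, ← Real.sqrt_sq hcp]
      exact Real.sqrt_le_sqrt (by nlinarith [sq_nonneg g])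
    have habs : |a / cp| ≤ 1 := by
      rw [abs_div, abs_of_pos hcpos, div_le_one hcpos]; exact haab
    have hcos : Real.cos T.th = |a| / cp := by
      rw [hth', Real.cos_arccos (by linarith [abs_nonneg (a/cp)]) habs, abs_div,
        abs_of_pos hcpos]
    have hsin : Real.sin T.th = |g| / cp := by
      rw [hth', Real.sin_arccos,
        show (1:ℝ) - |a/cp|^2 = (g/cp)^2 by
          rw [sq_abs]; field_simp; nlinarith,
        Real.sqrt_sq_eq_abs, abs_div, abs_of_pos hcpos]
    have eq1 : T.d1 * e1 * a = Real.cos T.th * cp := by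
      rw [hd1', hcos]
      calc e1 * bdbSgn a * e1 * a = e1^2 * (bdbSgn a * a) := by ring
      _ = |a| := by rw [he1, bdbSgn_mul_self]; ring
      _ = |a| / cp * cp := by field_simp
    have eq2 : T.d2 * e1 * g = -(Real.sin T.th * cp) := by
      rw [hd2', hsin]
      calc -(e1 * bdbSgn g) * e1 * g = -(e1^2 * (bdbSgn g * g)) := by ring
      _ = -|g| := by rw [he1, bdbSgn_mul_self]; ring
      _ = -(|g| / cp * cp) := by field_simp
    have hx : (T.d1 * e2p * r)^2 + (T.d2 * e2p * v)^2 = sp^2 := by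
      have k1 : (T.d1 * e2p * r)^2 = r^2 := by
        rw [hd1']
        calc (e1 * bdbSgn a * e2p * r)^2 = e1^2 * (bdbSgn a)^2 * e2p^2 * r^2 := by ring
        _ = r^2 := by rw [he1, he2p, bdbSgn_sq]; ring
      have k2 : (T.d2 * e2p * v)^2 = v^2 := by
        rw [hd2']
        calc (-(e1 * bdbSgn g) * e2p * v)^2 = e1^2 * (bdbSgn g)^2 * e2p^2 * v^2 := by ring
        _ = v^2 := by rw [he1, he2p, bdbSgn_sq]; ring
      rw [k1, k2]; exact hrv
    have huw : (Real.cos T.th)^2 + (-(Real.sin T.th))^2 = 1 := by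
      have := Real.sin_sq_add_cos_sq T.th; nlinarith
    have hkey : Real.cos T.th * (T.d1 * e2p * r) + (-(Real.sin T.th)) * (T.d2 * e2p * v)
        = sp := by
      have ma := bdbSgn_mul_abs a
      have mg := bdbSgn_mul_abs g
      calc Real.cos T.th * (T.d1 * e2p * r) + (-(Real.sin T.th)) * (T.d2 * e2p * v)
          = (|a|/cp) * (e1 * bdbSgn a * e2p * r) + (|g|/cp) * (e1 * bdbSgn g * e2p * v) := by
            rw [hcos, hsin, hd1', hd2']; ring
        _ = (e1*e2p/cp) * ((bdbSgn a * |a|) * r + (bdbSgn g * |g|) * v) := by ring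
        _ = (e1*e2p/cp) * (a*r + g*v) := by rw [ma, mg]
        _ = (e1 * e2p * (a*r + g*v))/cp := by ring
        _ = sp * cp / cp := by rw [ho]
        _ = sp := by field_simp
    obtain ⟨h3, h4⟩ := bdb_par2 hx huw hkey
    exact ⟨eq1, eq2, by rw [h3]; ring, by rw [h4]; ring⟩
lemma bdb_abs_le_one_of_sq {x : ℝ} (h : x^2 ≤ 1) : |x| ≤ 1 := by
  calc |x| = Real.sqrt (x^2) := (Real.sqrt_sq_eq_abs x).symm
  _ ≤ Real.sqrt 1 := Real.sqrt_le_sqrt h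
  _ = 1 := Real.sqrt_one

set_option maxHeartbeats 1600000 in
lemma bdbStep_phi (a g r v b p h u cp e1 e2p : ℝ)
    (hd1 : (bdbStep a g r v b p h u cp e1 e2p).d1 ^ 2 = 1)
    (hd2 : (bdbStep a g r v b p h u cp e1 e2p).d2 ^ 2 = 1)
    (hbp : b^2 + p^2 = Real.sin (bdbStep a g r v b p h u cp e1 e2p).th ^ 2)
    (hhu : h^2 + u^2 = Real.cos (bdbStep a g r v b p h u cp e1 e2p).th ^ 2)
    (ho : (bdbStep a g r v b p h u cp e1 e2p).d1 * (bdbStep a g r v b p h u cp e1 e2p).d2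
        * (b*h + p*u) = Real.sin (bdbStep a g r v b p h u cp e1 e2p).th
        * Real.cos (bdbStep a g r v b p h u cp e1 e2p).th) :
    (bdbStep a g r v b p h u cp e1 e2p).d1 * (bdbStep a g r v b p h u cp e1 e2p).e1n * b
      = -(Real.sin (bdbStep a g r v b p h u cp e1 e2p).th
          * Real.sin (bdbStep a g r v b p h u cp e1 e2p).ph) ∧
    (bdbStep a g r v b p h u cp e1 e2p).d2 * (bdbStep a g r v b p h u cp e1 e2p).e1n * h
      = -(Real.cos (bdbStep a g r v b p h u cp e1 e2p).th
          * Real.sin (bdbStep a g r v b p h u cp e1 e2p).ph) ∧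
    (bdbStep a g r v b p h u cp e1 e2p).d1 * (bdbStep a g r v b p h u cp e1 e2p).e2 * p
      = Real.sin (bdbStep a g r v b p h u cp e1 e2p).th
          * Real.cos (bdbStep a g r v b p h u cp e1 e2p).ph ∧
    (bdbStep a g r v b p h u cp e1 e2p).d2 * (bdbStep a g r v b p h u cp e1 e2p).e2 * u
      = Real.cos (bdbStep a g r v b p h u cp e1 e2p).th
          * Real.cos (bdbStep a g r v b p h u cp e1 e2p).ph := by
  have hs0 := bdbStep_sin_nonneg a g r v b p h u cp e1 e2p
  have hc0 := bdbStep_cos_nonneg a g r v b p h u cp e1 e2p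
  have hpyth := Real.sin_sq_add_cos_sq (bdbStep a g r v b p h u cp e1 e2p).th
  set T := bdbStep a g r v b p h u cp e1 e2p with hT
  have hph : T.ph = if Real.sin T.th = 0 then Real.arcsin (min 1 |T.d2 * h|)
      else Real.arcsin (min 1 |T.d1 * b / Real.sin T.th|) := by
    rw [hT]; simp only [bdbStep_ph, bdbStep_th, bdbStep_d1, bdbStep_d2]; rw [bdbPh]; rfl
  have he1n : T.e1n = if Real.sin T.th = 0 then -bdbSgn (T.d2 * h)
      else -bdbSgn (T.d1 * b) := by
    rw [hT]; simp only [bdbStep_e1n, bdbStep_th, bdbStep_d1, bdbStep_d2]; rw [bdbE1n]; rfl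
  have he2 : T.e2 = if Real.sin T.th = 0 then bdbSgn (T.d2 * u)
      else bdbSgn (T.d1 * p) := by
    rw [hT]; simp only [bdbStep_e2, bdbStep_th, bdbStep_d1, bdbStep_d2]; rw [bdbE2]; rfl
  clear_value T
  clear hT
  by_cases hs : Real.sin T.th = 0
  · -- degenerate case : sin θ = 0, cos θ = 1
    have hc1 : Real.cos T.th = 1 := by nlinarith [sq_nonneg (Real.cos T.th - 1)]
    have hb0 : b = 0 := by nlinarith [sq_nonneg b, sq_nonneg p]
    have hp0 : p = 0 := by nlinarith [sq_nonneg b, sq_nonneg p]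
    have hhu1 : h^2 + u^2 = 1 := by rw [hhu, hc1]; norm_num
    have hd2h : |T.d2 * h| ≤ 1 := by
      refine bdb_abs_le_one_of_sq ?_
      calc (T.d2*h)^2 = T.d2^2 * h^2 := by ring
      _ = h^2 := by rw [hd2]; ring
      _ ≤ 1 := by nlinarith [sq_nonneg u]
    have hph' : T.ph = Real.arcsin |T.d2 * h| := by
      rw [hph, if_pos hs, min_eq_right hd2h]
    have hs' : Real.sin T.ph = |T.d2 * h| := by
      rw [hph', Real.sin_arcsin (by linarith [abs_nonneg (T.d2*h)]) hd2h]
    have hc' : Real.cos T.ph = |T.d2 * u| := by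
      rw [hph', Real.cos_arcsin, sq_abs,
        show 1 - (T.d2*h)^2 = (T.d2*u)^2 by linear_combination -(h^2+u^2)*hd2 - hhu1,
        Real.sqrt_sq_eq_abs]
    have e1n' : T.e1n = -bdbSgn (T.d2 * h) := by rw [he1n, if_pos hs]
    have e2' : T.e2 = bdbSgn (T.d2 * u) := by rw [he2, if_pos hs]
    refine ⟨by rw [hb0, hs]; ring, ?_, by rw [hp0, hs]; ring, ?_⟩
    · calc T.d2 * T.e1n * h = -(bdbSgn (T.d2*h) * (T.d2*h)) := by rw [e1n']; ring
      _ = -|T.d2*h| := by rw [bdbSgn_mul_self]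
      _ = -(Real.cos T.th * Real.sin T.ph) := by rw [hc1, hs']; ring
    · calc T.d2 * T.e2 * u = bdbSgn (T.d2*u) * (T.d2*u) := by rw [e2']; ring
      _ = |T.d2*u| := by rw [bdbSgn_mul_self]
      _ = Real.cos T.th * Real.cos T.ph := by rw [hc1, hc']; ring
  · -- main case : sin θ > 0
    have hspos : 0 < Real.sin T.th := lt_of_le_of_ne hs0 (Ne.symm hs)
    have hb2 : (T.d1 * b / Real.sin T.th)^2 ≤ 1 := by
      rw [div_pow, div_le_one (by positivity)]
      calc (T.d1*b)^2 = T.d1^2 * b^2 := by ring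
      _ = b^2 := by rw [hd1]; ring
      _ ≤ Real.sin T.th ^2 := by nlinarith [sq_nonneg p]
    have habs : |T.d1 * b / Real.sin T.th| ≤ 1 := bdb_abs_le_one_of_sq hb2
    have hph' : T.ph = Real.arcsin |T.d1 * b / Real.sin T.th| := by
      rw [hph, if_neg hs, min_eq_right habs]
    have hs' : Real.sin T.ph = |T.d1 * b| / Real.sin T.th := by
      rw [hph', Real.sin_arcsin (by linarith [abs_nonneg (T.d1*b/Real.sin T.th)]) habs,
        abs_div, abs_of_pos hspos]
    have huw : (T.d1*b/Real.sin T.th)^2 + (T.d1*p/Real.sin T.th)^2 = 1 := by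
      have hsne : Real.sin T.th ≠ 0 := hs
      have k1 : (T.d1*b/Real.sin T.th)^2 = b^2/Real.sin T.th^2 := by
        rw [div_pow]
        congr 1
        calc (T.d1*b)^2 = T.d1^2*b^2 := by ring
        _ = b^2 := by rw [hd1]; ring
      have k2 : (T.d1*p/Real.sin T.th)^2 = p^2/Real.sin T.th^2 := by
        rw [div_pow]
        congr 1
        calc (T.d1*p)^2 = T.d1^2*p^2 := by ring
        _ = p^2 := by rw [hd1]; ring
      rw [k1, k2, ← add_div, hbp, div_self (pow_ne_zero 2 hsne)]
    have hc' : Real.cos T.ph = |T.d1 * p| / Real.sin T.th := by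
      rw [hph', Real.cos_arcsin, sq_abs,
        show 1 - (T.d1*b/Real.sin T.th)^2 = (T.d1*p/Real.sin T.th)^2 by linarith [huw],
        Real.sqrt_sq_eq_abs, abs_div, abs_of_pos hspos]
    have hx : (T.d2*h)^2 + (T.d2*u)^2 = Real.cos T.th ^2 := by
      have k1 : (T.d2*h)^2 = h^2 := by
        calc (T.d2*h)^2 = T.d2^2*h^2 := by ring
        _ = h^2 := by rw [hd2]; ring
      have k2 : (T.d2*u)^2 = u^2 := by
        calc (T.d2*u)^2 = T.d2^2*u^2 := by ring
        _ = u^2 := by rw [hd2]; ring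
      rw [k1, k2]; exact hhu
    have hk : (T.d1*b/Real.sin T.th) * (T.d2*h) + (T.d1*p/Real.sin T.th) * (T.d2*u)
        = Real.cos T.th := by
      have hsne : Real.sin T.th ≠ 0 := hs
      calc (T.d1*b/Real.sin T.th) * (T.d2*h) + (T.d1*p/Real.sin T.th) * (T.d2*u)
          = (T.d1 * T.d2 * (b*h + p*u))/Real.sin T.th := by ring
      _ = (Real.sin T.th * Real.cos T.th)/Real.sin T.th := by rw [ho]
      _ = Real.cos T.th := by field_simp
    obtain ⟨hh', hu'⟩ := bdb_par2 hx huw hk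
    have e1n' : T.e1n = -bdbSgn (T.d1 * b) := by rw [he1n, if_neg hs]
    have e2' : T.e2 = bdbSgn (T.d1 * p) := by rw [he2, if_neg hs]
    have hsne : Real.sin T.th ≠ 0 := hs
    refine ⟨?_, ?_, ?_, ?_⟩
    · calc T.d1 * T.e1n * b = -(bdbSgn (T.d1*b) * (T.d1*b)) := by rw [e1n']; ring
      _ = -|T.d1*b| := by rw [bdbSgn_mul_self]
      _ = -(Real.sin T.th * Real.sin T.ph) := by rw [hs']; field_simp
    · calc T.d2 * T.e1n * h = T.e1n * (T.d2 * h) := by ring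
      _ = -bdbSgn (T.d1*b) * (Real.cos T.th * (T.d1*b/Real.sin T.th)) := by rw [e1n', hh']
      _ = -(Real.cos T.th * ((bdbSgn (T.d1*b) * (T.d1*b))/Real.sin T.th)) := by ring
      _ = -(Real.cos T.th * (|T.d1*b|/Real.sin T.th)) := by rw [bdbSgn_mul_self]
      _ = -(Real.cos T.th * Real.sin T.ph) := by rw [hs']
    · calc T.d1 * T.e2 * p = bdbSgn (T.d1*p) * (T.d1*p) := by rw [e2']; ring
      _ = |T.d1*p| := by rw [bdbSgn_mul_self]
      _ = Real.sin T.th * Real.cos T.ph := by rw [hc']; field_simp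
    · calc T.d2 * T.e2 * u = T.e2 * (T.d2 * u) := by ring
      _ = bdbSgn (T.d1*p) * (Real.cos T.th * (T.d1*p/Real.sin T.th)) := by rw [e2', hu']
      _ = Real.cos T.th * ((bdbSgn (T.d1*p) * (T.d1*p))/Real.sin T.th) := by ring
      _ = Real.cos T.th * (|T.d1*p|/Real.sin T.th) := by rw [bdbSgn_mul_self]
      _ = Real.cos T.th * Real.cos T.ph := by rw [hc']
noncomputable def bdbRec (A G P U R V Bb H : ℕ → ℝ) : ℕ → BdbData
  | 0 => bdbStep (A 0) (G 0) 0 0 (Bb 0) (P 0) (H 0) (U 0) 1 1 1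
  | (j+1) => bdbStep (A (j+1)) (G (j+1)) (R j) (V j) (Bb (j+1)) (P (j+1)) (H (j+1)) (U (j+1))
      (Real.cos (bdbRec A G P U R V Bb H j).ph) (bdbRec A G P U R V Bb H j).e1n
      (bdbRec A G P U R V Bb H j).e2

noncomputable def bdbE1 (A G P U R V Bb H : ℕ → ℝ) : ℕ → ℝ
  | 0 => 1
  | (j+1) => (bdbRec A G P U R V Bb H j).e1n

lemma bdbRec_zero (A G P U R V Bb H : ℕ → ℝ) :
    bdbRec A G P U R V Bb H 0 = bdbStep (A 0) (G 0) 0 0 (Bb 0) (P 0) (H 0) (U 0) 1 1 1 := rfl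

lemma bdbRec_succ (A G P U R V Bb H : ℕ → ℝ) (j : ℕ) :
    bdbRec A G P U R V Bb H (j+1)
      = bdbStep (A (j+1)) (G (j+1)) (R j) (V j) (Bb (j+1)) (P (j+1)) (H (j+1)) (U (j+1))
        (Real.cos (bdbRec A G P U R V Bb H j).ph) (bdbRec A G P U R V Bb H j).e1n
        (bdbRec A G P U R V Bb H j).e2 := rfl

lemma bdbE1_zero (A G P U R V Bb H : ℕ → ℝ) : bdbE1 A G P U R V Bb H 0 = 1 := rfl

lemma bdbE1_succ (A G P U R V Bb H : ℕ → ℝ) (j : ℕ) :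
    bdbE1 A G P U R V Bb H (j+1) = (bdbRec A G P U R V Bb H j).e1n := rfl

lemma bdbRec_e1n_cases (A G P U R V Bb H : ℕ → ℝ) (i : ℕ) :
    (bdbRec A G P U R V Bb H i).e1n = 1 ∨ (bdbRec A G P U R V Bb H i).e1n = -1 := by
  cases i with
  | zero => rw [bdbRec_zero]; exact bdbStep_e1n_cases _ _ _ _ _ _ _ _ _ _ _
  | succ j => rw [bdbRec_succ]; exact bdbStep_e1n_cases _ _ _ _ _ _ _ _ _ _ _

lemma bdbRec_e2_cases (A G P U R V Bb H : ℕ → ℝ) (i : ℕ) :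
    (bdbRec A G P U R V Bb H i).e2 = 1 ∨ (bdbRec A G P U R V Bb H i).e2 = -1 := by
  cases i with
  | zero => rw [bdbRec_zero]; exact bdbStep_e2_cases _ _ _ _ _ _ _ _ _ _ _
  | succ j => rw [bdbRec_succ]; exact bdbStep_e2_cases _ _ _ _ _ _ _ _ _ _ _

lemma bdbE1_cases (A G P U R V Bb H : ℕ → ℝ) (i : ℕ) :
    bdbE1 A G P U R V Bb H i = 1 ∨ bdbE1 A G P U R V Bb H i = -1 := by
  cases i with
  | zero => left; rfl
  | succ j => rw [bdbE1_succ]; exact bdbRec_e1n_cases _ _ _ _ _ _ _ _ _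

lemma bdbRec_d1_cases (A G P U R V Bb H : ℕ → ℝ) (i : ℕ) :
    (bdbRec A G P U R V Bb H i).d1 = 1 ∨ (bdbRec A G P U R V Bb H i).d1 = -1 := by
  cases i with
  | zero => rw [bdbRec_zero]; exact bdbStep_d1_cases _ _ _ _ _ _ _ _ _ _ _ (Or.inl rfl) (Or.inl rfl)
  | succ j =>
    rw [bdbRec_succ]
    exact bdbStep_d1_cases _ _ _ _ _ _ _ _ _ _ _
      (bdbRec_e1n_cases A G P U R V Bb H j) (bdbRec_e2_cases A G P U R V Bb H j)

lemma bdbRec_d2_cases (A G P U R V Bb H : ℕ → ℝ) (i : ℕ) :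
    (bdbRec A G P U R V Bb H i).d2 = 1 ∨ (bdbRec A G P U R V Bb H i).d2 = -1 := by
  cases i with
  | zero => rw [bdbRec_zero]; exact bdbStep_d2_cases _ _ _ _ _ _ _ _ _ _ _ (Or.inl rfl) (Or.inl rfl)
  | succ j =>
    rw [bdbRec_succ]
    exact bdbStep_d2_cases _ _ _ _ _ _ _ _ _ _ _
      (bdbRec_e1n_cases A G P U R V Bb H j) (bdbRec_e2_cases A G P U R V Bb H j)

lemma bdbRec_th_mem (A G P U R V Bb H : ℕ → ℝ) (i : ℕ) :
    (bdbRec A G P U R V Bb H i).th ∈ Set.Icc 0 (Real.pi/2) := by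
  cases i with
  | zero => rw [bdbRec_zero]; exact bdbStep_th_mem _ _ _ _ _ _ _ _ _ _ _
  | succ j => rw [bdbRec_succ]; exact bdbStep_th_mem _ _ _ _ _ _ _ _ _ _ _

lemma bdbRec_ph_mem (A G P U R V Bb H : ℕ → ℝ) (i : ℕ) :
    (bdbRec A G P U R V Bb H i).ph ∈ Set.Icc 0 (Real.pi/2) := by
  cases i with
  | zero => rw [bdbRec_zero]; exact bdbStep_ph_mem _ _ _ _ _ _ _ _ _ _ _
  | succ j => rw [bdbRec_succ]; exact bdbStep_ph_mem _ _ _ _ _ _ _ _ _ _ _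

lemma bdbRec_sin_ph_nonneg (A G P U R V Bb H : ℕ → ℝ) (i : ℕ) :
    0 ≤ Real.sin (bdbRec A G P U R V Bb H i).ph := by
  have h := bdbRec_ph_mem A G P U R V Bb H i
  have hpi := Real.pi_pos
  exact Real.sin_nonneg_of_nonneg_of_le_pi h.1 (by linarith [h.2])

lemma bdbRec_cos_ph_nonneg (A G P U R V Bb H : ℕ → ℝ) (i : ℕ) :
    0 ≤ Real.cos (bdbRec A G P U R V Bb H i).ph := by
  have h := bdbRec_ph_mem A G P U R V Bb H i
  exact Real.cos_nonneg_of_mem_Icc ⟨by linarith [h.1, Real.pi_pos], h.2⟩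
noncomputable def bdbCp (A G P U R V Bb H : ℕ → ℝ) : ℕ → ℝ
  | 0 => 1
  | (j+1) => Real.cos (bdbRec A G P U R V Bb H j).ph

lemma bdbCp_zero (A G P U R V Bb H : ℕ → ℝ) : bdbCp A G P U R V Bb H 0 = 1 := rfl
lemma bdbCp_succ (A G P U R V Bb H : ℕ → ℝ) (j : ℕ) :
    bdbCp A G P U R V Bb H (j+1) = Real.cos (bdbRec A G P U R V Bb H j).ph := rfl

section BdbMain

variable (A G P U R V Bb H : ℕ → ℝ)

local notation "RC" j => bdbRec A G P U R V Bb H j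
local notation "E1" j => bdbE1 A G P U R V Bb H j
local notation "CP" j => bdbCp A G P U R V Bb H j

set_option maxHeartbeats 4000000 in
lemma bdb_main (q : ℕ)
    (hN1z : 0 < q → A 0^2 + G 0^2 = 1)
    (hN1 : ∀ j, j+1 < q → Bb j^2 + A (j+1)^2 + H j^2 + G (j+1)^2 = 1)
    (hN2 : ∀ j, j+1 < q → P j^2 + R j^2 + U j^2 + V j^2 = 1)
    (hO1 : ∀ j, j+1 < q → Bb j*P j + A (j+1)*R j + H j*U j + G (j+1)*V j = 0)
    (hM1z : 0 < q → A 0^2 + Bb 0^2 + P 0^2 = 1)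
    (hM1 : ∀ j, j+1 < q → A (j+1)^2 + Bb (j+1)^2 + R j^2 + P (j+1)^2 = 1)
    (hM2z : 0 < q → G 0^2 + H 0^2 + U 0^2 = 1)
    (hM2 : ∀ j, j+1 < q → G (j+1)^2 + H (j+1)^2 + V j^2 + U (j+1)^2 = 1)
    (hO2z : 0 < q → A 0*G 0 + Bb 0*H 0 + P 0*U 0 = 0)
    (hO2 : ∀ j, j+1 < q → A (j+1)*G (j+1) + Bb (j+1)*H (j+1) + R j*V j + P (j+1)*U (j+1) = 0) :
    ∀ i, i < q →
      (RC i).d1 * (E1 i) * A i = Real.cos ((RC i).th) * (CP i) ∧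
      (RC i).d2 * (E1 i) * G i = -(Real.sin ((RC i).th) * (CP i)) ∧
      (RC i).d1 * (RC i).e1n * Bb i = -(Real.sin ((RC i).th) * Real.sin ((RC i).ph)) ∧
      (RC i).d2 * (RC i).e1n * H i = -(Real.cos ((RC i).th) * Real.sin ((RC i).ph)) ∧
      (RC i).d1 * (RC i).e2 * P i = Real.sin ((RC i).th) * Real.cos ((RC i).ph) ∧
      (RC i).d2 * (RC i).e2 * U i = Real.cos ((RC i).th) * Real.cos ((RC i).ph) ∧
      (∀ k, i = k + 1 →
        ((RC i).d1 * (RC k).e2 * R k = Real.cos ((RC i).th) * Real.sin ((RC k).ph) ∧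
         (RC i).d2 * (RC k).e2 * V k = -(Real.sin ((RC i).th) * Real.sin ((RC k).ph)))) := by
  intro i
  induction i with
  | zero =>
    intro h0
    have hrec := bdbRec_zero A G P U R V Bb H
    have theta := bdbStep_theta (A 0) (G 0) 0 0 (Bb 0) (P 0) (H 0) (U 0) 1 0 1 1
      (by norm_num) (by norm_num) (by norm_num) (le_refl 0) (by norm_num)
      (by rw [show ((1:ℝ))^2 = 1 by norm_num]; exact hN1z h0) (by norm_num) (by ring)
    rw [← hrec] at theta
    obtain ⟨c1, c2, -, -⟩ := theta
    have hd10 : ((RC 0)).d1^2 = 1 := bdb_sq_one (bdbRec_d1_cases A G P U R V Bb H 0)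
    have hd20 : ((RC 0)).d2^2 = 1 := bdb_sq_one (bdbRec_d2_cases A G P U R V Bb H 0)
    have pyth0 := Real.sin_sq_add_cos_sq ((RC 0)).th
    have one_sq : ((1:ℝ))^2 = 1 := by norm_num
    have sA : A 0^2 = (Real.cos ((RC 0)).th * 1)^2 := bdb_sq_of_sign_eq hd10 one_sq c1
    have sG : G 0^2 = (-(Real.sin ((RC 0)).th * 1))^2 := bdb_sq_of_sign_eq hd20 one_sq c2
    have hbp : Bb 0^2 + P 0^2 = Real.sin ((RC 0)).th^2 := by
      linear_combination hM1z h0 - sA - pyth0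
    have hhu : H 0^2 + U 0^2 = Real.cos ((RC 0)).th^2 := by
      linear_combination hM2z h0 - sG - pyth0
    have k3 : ((RC 0)).d1 * ((RC 0)).d2 * (A 0 * G 0)
        = (Real.cos ((RC 0)).th * 1) * (-(Real.sin ((RC 0)).th * 1)) :=
      bdb_mul_of_sign_eq one_sq c1 c2
    have ho2 : ((RC 0)).d1 * ((RC 0)).d2 * (Bb 0 * H 0 + P 0 * U 0)
        = Real.sin ((RC 0)).th * Real.cos ((RC 0)).th := by
      linear_combination ((RC 0)).d1 * ((RC 0)).d2 * hO2z h0 - k3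
    have phi := bdbStep_phi (A 0) (G 0) 0 0 (Bb 0) (P 0) (H 0) (U 0) 1 1 1
      (by rw [← hrec]; exact hd10) (by rw [← hrec]; exact hd20)
      (by rw [← hrec]; exact hbp) (by rw [← hrec]; exact hhu)
      (by rw [← hrec]; exact ho2)
    rw [← hrec] at phi
    refine ⟨?_, ?_, phi.1, phi.2.1, phi.2.2.1, phi.2.2.2, ?_⟩
    · rw [bdbE1_zero, bdbCp_zero]; exact c1
    · rw [bdbE1_zero, bdbCp_zero]; exact c2
    · intro k hk; exact absurd hk (Nat.succ_ne_zero k).symm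
  | succ j IH =>
    intro hj1
    have hjq : j < q := Nat.lt_of_succ_lt hj1
    obtain ⟨d1, d2, d3, d4, d5, d6, -⟩ := IH hjq
    have hrec := bdbRec_succ A G P U R V Bb H j
    have hd1j : ((RC j)).d1^2 = 1 := bdb_sq_one (bdbRec_d1_cases A G P U R V Bb H j)
    have hd2j : ((RC j)).d2^2 = 1 := bdb_sq_one (bdbRec_d2_cases A G P U R V Bb H j)
    have he1nj : ((RC j)).e1n^2 = 1 := bdb_sq_one (bdbRec_e1n_cases A G P U R V Bb H j)
    have he2j : ((RC j)).e2^2 = 1 := bdb_sq_one (bdbRec_e2_cases A G P U R V Bb H j)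
    have pythTj := Real.sin_sq_add_cos_sq ((RC j)).th
    have pythPj := Real.sin_sq_add_cos_sq ((RC j)).ph
    have sBb : Bb j^2 = (-(Real.sin ((RC j)).th * Real.sin ((RC j)).ph))^2 :=
      bdb_sq_of_sign_eq hd1j he1nj d3
    have sH : H j^2 = (-(Real.cos ((RC j)).th * Real.sin ((RC j)).ph))^2 :=
      bdb_sq_of_sign_eq hd2j he1nj d4
    have sP : P j^2 = (Real.sin ((RC j)).th * Real.cos ((RC j)).ph)^2 :=
      bdb_sq_of_sign_eq hd1j he2j d5
    have sU : U j^2 = (Real.cos ((RC j)).th * Real.cos ((RC j)).ph)^2 :=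
      bdb_sq_of_sign_eq hd2j he2j d6
    have hag : A (j+1)^2 + G (j+1)^2 = (Real.cos ((RC j)).ph)^2 := by
      linear_combination hN1 j hj1 - sBb - sH - Real.sin ((RC j)).ph^2 * pythTj - pythPj
    have hrv : R j^2 + V j^2 = (Real.sin ((RC j)).ph)^2 := by
      linear_combination hN2 j hj1 - sP - sU - Real.cos ((RC j)).ph^2 * pythTj - pythPj
    have d3' : ((RC j)).e1n * ((RC j)).d1 * Bb j
        = -(Real.sin ((RC j)).th * Real.sin ((RC j)).ph) := by linear_combination d3
    have d4' : ((RC j)).e1n * ((RC j)).d2 * H j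
        = -(Real.cos ((RC j)).th * Real.sin ((RC j)).ph) := by linear_combination d4
    have d5' : ((RC j)).e2 * ((RC j)).d1 * P j
        = Real.sin ((RC j)).th * Real.cos ((RC j)).ph := by linear_combination d5
    have d6' : ((RC j)).e2 * ((RC j)).d2 * U j
        = Real.cos ((RC j)).th * Real.cos ((RC j)).ph := by linear_combination d6
    have k1 : ((RC j)).e1n * ((RC j)).e2 * (Bb j * P j)
        = (-(Real.sin ((RC j)).th * Real.sin ((RC j)).ph))
          * (Real.sin ((RC j)).th * Real.cos ((RC j)).ph) :=
      bdb_mul_of_sign_eq hd1j d3' d5'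
    have k2 : ((RC j)).e1n * ((RC j)).e2 * (H j * U j)
        = (-(Real.cos ((RC j)).th * Real.sin ((RC j)).ph))
          * (Real.cos ((RC j)).th * Real.cos ((RC j)).ph) :=
      bdb_mul_of_sign_eq hd2j d4' d6'
    have ho1 : ((RC j)).e1n * ((RC j)).e2 * (A (j+1) * R j + G (j+1) * V j)
        = Real.sin ((RC j)).ph * Real.cos ((RC j)).ph := by
      linear_combination ((RC j)).e1n * ((RC j)).e2 * hO1 j hj1 - k1 - k2
        + Real.sin ((RC j)).ph * Real.cos ((RC j)).ph * pythTj
    have theta := bdbStep_theta (A (j+1)) (G (j+1)) (R j) (V j) (Bb (j+1)) (P (j+1))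
      (H (j+1)) (U (j+1)) (Real.cos ((RC j)).ph) (Real.sin ((RC j)).ph)
      ((RC j)).e1n ((RC j)).e2
      he1nj he2j (bdbRec_cos_ph_nonneg A G P U R V Bb H j)
      (bdbRec_sin_ph_nonneg A G P U R V Bb H j) (by linarith [pythPj])
      hag hrv (by linear_combination ho1)
    rw [← hrec] at theta
    obtain ⟨c1, c2, c7a, c7b⟩ := theta
    have hd1i : ((RC (j+1))).d1^2 = 1 := bdb_sq_one (bdbRec_d1_cases A G P U R V Bb H (j+1))
    have hd2i : ((RC (j+1))).d2^2 = 1 := bdb_sq_one (bdbRec_d2_cases A G P U R V Bb H (j+1))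
    have pythTi := Real.sin_sq_add_cos_sq ((RC (j+1))).th
    have sA : A (j+1)^2 = (Real.cos ((RC (j+1))).th * Real.cos ((RC j)).ph)^2 :=
      bdb_sq_of_sign_eq hd1i he1nj c1
    have sG : G (j+1)^2 = (-(Real.sin ((RC (j+1))).th * Real.cos ((RC j)).ph))^2 :=
      bdb_sq_of_sign_eq hd2i he1nj c2
    have sR : R j^2 = (Real.cos ((RC (j+1))).th * Real.sin ((RC j)).ph)^2 :=
      bdb_sq_of_sign_eq hd1i he2j c7a
    have sV : V j^2 = (-(Real.sin ((RC (j+1))).th * Real.sin ((RC j)).ph))^2 :=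
      bdb_sq_of_sign_eq hd2i he2j c7b
    have hbp : Bb (j+1)^2 + P (j+1)^2 = Real.sin ((RC (j+1))).th^2 := by
      linear_combination hM1 j hj1 - sA - sR
        - Real.cos ((RC (j+1))).th^2 * pythPj - pythTi
    have hhu : H (j+1)^2 + U (j+1)^2 = Real.cos ((RC (j+1))).th^2 := by
      linear_combination hM2 j hj1 - sG - sV
        - Real.sin ((RC (j+1))).th^2 * pythPj - pythTi
    have k3 : ((RC (j+1))).d1 * ((RC (j+1))).d2 * (A (j+1) * G (j+1))
        = (Real.cos ((RC (j+1))).th * Real.cos ((RC j)).ph)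
          * (-(Real.sin ((RC (j+1))).th * Real.cos ((RC j)).ph)) :=
      bdb_mul_of_sign_eq he1nj c1 c2
    have k4 : ((RC (j+1))).d1 * ((RC (j+1))).d2 * (R j * V j)
        = (Real.cos ((RC (j+1))).th * Real.sin ((RC j)).ph)
          * (-(Real.sin ((RC (j+1))).th * Real.sin ((RC j)).ph)) :=
      bdb_mul_of_sign_eq he2j c7a c7b
    have ho2 : ((RC (j+1))).d1 * ((RC (j+1))).d2 * (Bb (j+1) * H (j+1) + P (j+1) * U (j+1))
        = Real.sin ((RC (j+1))).th * Real.cos ((RC (j+1))).th := by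
      linear_combination ((RC (j+1))).d1 * ((RC (j+1))).d2 * hO2 j hj1 - k3 - k4
        + Real.sin ((RC (j+1))).th * Real.cos ((RC (j+1))).th * pythPj
    have phi := bdbStep_phi (A (j+1)) (G (j+1)) (R j) (V j) (Bb (j+1)) (P (j+1))
      (H (j+1)) (U (j+1)) (Real.cos ((RC j)).ph) ((RC j)).e1n ((RC j)).e2
      (by rw [← hrec]; exact hd1i) (by rw [← hrec]; exact hd2i)
      (by rw [← hrec]; exact hbp) (by rw [← hrec]; exact hhu)
      (by rw [← hrec]; exact ho2)
    rw [← hrec] at phi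
    refine ⟨?_, ?_, phi.1, phi.2.1, phi.2.2.1, phi.2.2.2, ?_⟩
    · rw [bdbE1_succ, bdbCp_succ]; exact c1
    · rw [bdbE1_succ, bdbCp_succ]; exact c2
    · intro k hk
      have : k = j := by omega
      subst this
      exact ⟨c7a, c7b⟩
lemma bdbRec_ph_eq_zero (A G P U R V Bb H : ℕ → ℝ) (i : ℕ)
    (hb : Bb i = 0) (hh : H i = 0) : (bdbRec A G P U R V Bb H i).ph = 0 := by
  cases i with
  | zero => rw [bdbRec_zero]; exact bdbStep_ph_eq_zero _ _ _ _ _ _ _ _ _ _ _ hb hh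
  | succ j => rw [bdbRec_succ]; exact bdbStep_ph_eq_zero _ _ _ _ _ _ _ _ _ _ _ hb hh

lemma bdbCp_eq (A G P U R V Bb H : ℕ → ℝ) (n : ℕ) :
    bdbCp A G P U R V Bb H n
      = if 0 < n then Real.cos ((bdbRec A G P U R V Bb H (n-1)).ph) else 1 := by
  cases n with
  | zero => simp [bdbCp]
  | succ k => simp [bdbCp]

set_option maxHeartbeats 4000000 in
/-- Any orthogonal matrix whose blocks are bidiagonal (upper, lower, upper, lower)
can be brought to bidiagonal block form by pre- and post-multiplication by
diagonal signature matrices. -/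
theorem bdb_up_to_signs (q : ℕ) (hq : 1 ≤ q)
    (B₁₁ B₁₂ B₂₁ B₂₂ : Matrix (Fin q) (Fin q) ℝ)
    (horth : Matrix.fromBlocks B₁₁ B₁₂ B₂₁ B₂₂ ∈ Matrix.orthogonalGroup (Fin q ⊕ Fin q) ℝ)
    (h11 : ∀ i j : Fin q, ¬(j.val = i.val ∨ j.val = i.val + 1) → B₁₁ i j = 0)
    (h21 : ∀ i j : Fin q, ¬(j.val = i.val ∨ j.val = i.val + 1) → B₂₁ i j = 0)
    (h12 : ∀ i j : Fin q, ¬(j.val = i.val ∨ i.val = j.val + 1) → B₁₂ i j = 0)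
    (h22 : ∀ i j : Fin q, ¬(j.val = i.val ∨ i.val = j.val + 1) → B₂₂ i j = 0) :
    ∃ (D₁ D₂ E₁ E₂ : Fin q → ℝ) (θ : Fin q → ℝ) (φ : Fin (q - 1) → ℝ),
      (∀ i, D₁ i = 1 ∨ D₁ i = -1) ∧ (∀ i, D₂ i = 1 ∨ D₂ i = -1) ∧
      (∀ i, E₁ i = 1 ∨ E₁ i = -1) ∧ (∀ i, E₂ i = 1 ∨ E₂ i = -1) ∧
      (∀ i, θ i ∈ Set.Icc 0 (Real.pi / 2)) ∧
      (∀ i, φ i ∈ Set.Icc 0 (Real.pi / 2)) ∧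
      Matrix.fromBlocks (Matrix.diagonal D₁) 0 0 (Matrix.diagonal D₂) *
          Matrix.fromBlocks B₁₁ B₁₂ B₂₁ B₂₂ *
          Matrix.fromBlocks (Matrix.diagonal E₁) 0 0 (Matrix.diagonal E₂) =
        Matrix.fromBlocks (bdbB11 q θ φ) (bdbB12 q θ φ) (bdbB21 q θ φ) (bdbB22 q θ φ) := by

  have hXs := (Matrix.mem_orthogonalGroup_iff _ _).1 horth
  have hXs' := (Matrix.mem_orthogonalGroup_iff' _ _).1 horth
  have hrowLL : ∀ k l : Fin q, (∑ m, B₁₁ k m * B₁₁ l m) + (∑ m, B₁₂ k m * B₁₂ l m)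
      = (if k = l then (1:ℝ) else 0) := by
    intro k l
    have e := congrFun (congrFun hXs (Sum.inl k)) (Sum.inl l)
    simp only [Matrix.mul_apply, Fintype.sum_sum_type, Matrix.star_apply, star_trivial,
      Matrix.fromBlocks_apply₁₁, Matrix.fromBlocks_apply₁₂, Matrix.one_apply,
      Sum.inl.injEq] at e
    exact e
  have hrowRR : ∀ k l : Fin q, (∑ m, B₂₁ k m * B₂₁ l m) + (∑ m, B₂₂ k m * B₂₂ l m)
      = (if k = l then (1:ℝ) else 0) := by
    intro k l
    have e := congrFun (congrFun hXs (Sum.inr k)) (Sum.inr l)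
    simp only [Matrix.mul_apply, Fintype.sum_sum_type, Matrix.star_apply, star_trivial,
      Matrix.fromBlocks_apply₂₁, Matrix.fromBlocks_apply₂₂, Matrix.one_apply,
      Sum.inr.injEq] at e
    exact e
  have hrowLR : ∀ k l : Fin q, (∑ m, B₁₁ k m * B₂₁ l m) + (∑ m, B₁₂ k m * B₂₂ l m)
      = 0 := by
    intro k l
    have e := congrFun (congrFun hXs (Sum.inl k)) (Sum.inr l)
    simp only [Matrix.mul_apply, Fintype.sum_sum_type, Matrix.star_apply, star_trivial,
      Matrix.fromBlocks_apply₁₁, Matrix.fromBlocks_apply₁₂, Matrix.fromBlocks_apply₂₁,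
      Matrix.fromBlocks_apply₂₂, Matrix.one_apply, reduceCtorEq, if_false] at e
    exact e
  have hcolLL : ∀ k l : Fin q, (∑ m, B₁₁ m k * B₁₁ m l) + (∑ m, B₂₁ m k * B₂₁ m l)
      = (if k = l then (1:ℝ) else 0) := by
    intro k l
    have e := congrFun (congrFun hXs' (Sum.inl k)) (Sum.inl l)
    simp only [Matrix.mul_apply, Fintype.sum_sum_type, Matrix.star_apply, star_trivial,
      Matrix.fromBlocks_apply₁₁, Matrix.fromBlocks_apply₂₁, Matrix.one_apply,
      Sum.inl.injEq] at e
    exact e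
  have hcolRR : ∀ k l : Fin q, (∑ m, B₁₂ m k * B₁₂ m l) + (∑ m, B₂₂ m k * B₂₂ m l)
      = (if k = l then (1:ℝ) else 0) := by
    intro k l
    have e := congrFun (congrFun hXs' (Sum.inr k)) (Sum.inr l)
    simp only [Matrix.mul_apply, Fintype.sum_sum_type, Matrix.star_apply, star_trivial,
      Matrix.fromBlocks_apply₁₂, Matrix.fromBlocks_apply₂₂, Matrix.one_apply,
      Sum.inr.injEq] at e
    exact e
  have hcolLR : ∀ k l : Fin q, (∑ m, B₁₁ m k * B₁₂ m l) + (∑ m, B₂₁ m k * B₂₂ m l)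
      = 0 := by
    intro k l
    have e := congrFun (congrFun hXs' (Sum.inl k)) (Sum.inr l)
    simp only [Matrix.mul_apply, Fintype.sum_sum_type, Matrix.star_apply, star_trivial,
      Matrix.fromBlocks_apply₁₁, Matrix.fromBlocks_apply₁₂, Matrix.fromBlocks_apply₂₁,
      Matrix.fromBlocks_apply₂₂, Matrix.one_apply, reduceCtorEq, if_false] at e
    exact e
  -- entry functions with junk extension
  set A : ℕ → ℝ := fun i => if h : i < q then B₁₁ ⟨i,h⟩ ⟨i,h⟩ else 0 with hA
  set G : ℕ → ℝ := fun i => if h : i < q then B₂₁ ⟨i,h⟩ ⟨i,h⟩ else 0 with hG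
  set P : ℕ → ℝ := fun i => if h : i < q then B₁₂ ⟨i,h⟩ ⟨i,h⟩ else 0 with hP
  set U : ℕ → ℝ := fun i => if h : i < q then B₂₂ ⟨i,h⟩ ⟨i,h⟩ else 0 with hU
  set Bb : ℕ → ℝ := fun i => if h : i+1 < q then B₁₁ ⟨i, Nat.lt_of_succ_lt h⟩ ⟨i+1,h⟩ else 0 with hBb
  set Hh : ℕ → ℝ := fun i => if h : i+1 < q then B₂₁ ⟨i, Nat.lt_of_succ_lt h⟩ ⟨i+1,h⟩ else 0 with hHh
  set R : ℕ → ℝ := fun i => if h : i+1 < q then B₁₂ ⟨i+1,h⟩ ⟨i, Nat.lt_of_succ_lt h⟩ else 0 with hR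
  set V : ℕ → ℝ := fun i => if h : i+1 < q then B₂₂ ⟨i+1,h⟩ ⟨i, Nat.lt_of_succ_lt h⟩ else 0 with hV
  have hAe : ∀ (i : ℕ) (h : i < q), A i = B₁₁ ⟨i,h⟩ ⟨i,h⟩ := fun i h => by
    rw [hA]; exact dif_pos h
  have hGe : ∀ (i : ℕ) (h : i < q), G i = B₂₁ ⟨i,h⟩ ⟨i,h⟩ := fun i h => by
    rw [hG]; exact dif_pos h
  have hPe : ∀ (i : ℕ) (h : i < q), P i = B₁₂ ⟨i,h⟩ ⟨i,h⟩ := fun i h => by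
    rw [hP]; exact dif_pos h
  have hUe : ∀ (i : ℕ) (h : i < q), U i = B₂₂ ⟨i,h⟩ ⟨i,h⟩ := fun i h => by
    rw [hU]; exact dif_pos h
  have hBbe : ∀ (i : ℕ) (h : i+1 < q), Bb i = B₁₁ ⟨i, Nat.lt_of_succ_lt h⟩ ⟨i+1,h⟩ :=
    fun i h => by rw [hBb]; exact dif_pos h
  have hHhe : ∀ (i : ℕ) (h : i+1 < q), Hh i = B₂₁ ⟨i, Nat.lt_of_succ_lt h⟩ ⟨i+1,h⟩ :=
    fun i h => by rw [hHh]; exact dif_pos h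
  have hRe : ∀ (i : ℕ) (h : i+1 < q), R i = B₁₂ ⟨i+1,h⟩ ⟨i, Nat.lt_of_succ_lt h⟩ :=
    fun i h => by rw [hR]; exact dif_pos h
  have hVe : ∀ (i : ℕ) (h : i+1 < q), V i = B₂₂ ⟨i+1,h⟩ ⟨i, Nat.lt_of_succ_lt h⟩ :=
    fun i h => by rw [hV]; exact dif_pos h
  have hBb0 : ∀ (i : ℕ), ¬(i+1 < q) → Bb i = 0 := fun i h => by rw [hBb]; exact dif_neg h
  have hHh0 : ∀ (i : ℕ), ¬(i+1 < q) → Hh i = 0 := fun i h => by rw [hHh]; exact dif_neg h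
  -- sparsity in ℕ form
  have h11' : ∀ (a b : ℕ) (ha : a < q) (hb : b < q), ¬(b = a ∨ b = a+1) →
      B₁₁ ⟨a,ha⟩ ⟨b,hb⟩ = 0 := fun a b ha hb hc => h11 ⟨a,ha⟩ ⟨b,hb⟩ hc
  have h21' : ∀ (a b : ℕ) (ha : a < q) (hb : b < q), ¬(b = a ∨ b = a+1) →
      B₂₁ ⟨a,ha⟩ ⟨b,hb⟩ = 0 := fun a b ha hb hc => h21 ⟨a,ha⟩ ⟨b,hb⟩ hc
  have h12' : ∀ (a b : ℕ) (ha : a < q) (hb : b < q), ¬(b = a ∨ a = b+1) →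
      B₁₂ ⟨a,ha⟩ ⟨b,hb⟩ = 0 := fun a b ha hb hc => h12 ⟨a,ha⟩ ⟨b,hb⟩ hc
  have h22' : ∀ (a b : ℕ) (ha : a < q) (hb : b < q), ¬(b = a ∨ a = b+1) →
      B₂₂ ⟨a,ha⟩ ⟨b,hb⟩ = 0 := fun a b ha hb hc => h22 ⟨a,ha⟩ ⟨b,hb⟩ hc
  have h0q : 0 < q := hq
  -- the ten scalar facts
  have hN1z : A 0^2 + G 0^2 = 1 := by
    have e := hcolLL ⟨0,h0q⟩ ⟨0,h0q⟩
    rw [bdb_sum_single 0 h0q _ _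
        (fun m hm => h11' m.val 0 m.isLt h0q (by omega)),
      bdb_sum_single 0 h0q _ _
        (fun m hm => h21' m.val 0 m.isLt h0q (by omega)), if_pos rfl] at e
    rw [hAe 0 h0q, hGe 0 h0q]
    linear_combination e
  have hN1 : ∀ j, j+1 < q → Bb j^2 + A (j+1)^2 + Hh j^2 + G (j+1)^2 = 1 := by
    intro j hj
    have e := hcolLL ⟨j+1,hj⟩ ⟨j+1,hj⟩
    rw [bdb_sum_pair j hj _ _
        (fun m hm1 hm2 => h11' m.val (j+1) m.isLt hj (by omega)),
      bdb_sum_pair j hj _ _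
        (fun m hm1 hm2 => h21' m.val (j+1) m.isLt hj (by omega)), if_pos rfl] at e
    rw [hBbe j hj, hAe (j+1) hj, hHhe j hj, hGe (j+1) hj]
    linear_combination e
  have hN2 : ∀ j, j+1 < q → P j^2 + R j^2 + U j^2 + V j^2 = 1 := by
    intro j hj
    have jq : j < q := Nat.lt_of_succ_lt hj
    have e := hcolRR ⟨j,jq⟩ ⟨j,jq⟩
    rw [bdb_sum_pair j hj _ _
        (fun m hm1 hm2 => h12' m.val j m.isLt jq (by omega)),
      bdb_sum_pair j hj _ _
        (fun m hm1 hm2 => h22' m.val j m.isLt jq (by omega)), if_pos rfl] at e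
    rw [hPe j jq, hRe j hj, hUe j jq, hVe j hj]
    linear_combination e
  have hO1 : ∀ j, j+1 < q → Bb j*P j + A (j+1)*R j + Hh j*U j + G (j+1)*V j = 0 := by
    intro j hj
    have jq : j < q := Nat.lt_of_succ_lt hj
    have e := hcolLR ⟨j+1,hj⟩ ⟨j,jq⟩
    rw [bdb_sum_pair j hj _ _
        (fun m hm1 hm2 => h11' m.val (j+1) m.isLt hj (by omega)),
      bdb_sum_pair j hj _ _
        (fun m hm1 hm2 => h21' m.val (j+1) m.isLt hj (by omega))] at e
    rw [hBbe j hj, hAe (j+1) hj, hHhe j hj, hGe (j+1) hj, hPe j jq, hRe j hj,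
      hUe j jq, hVe j hj]
    linear_combination e
  have hM1z : A 0^2 + Bb 0^2 + P 0^2 = 1 := by
    have e := hrowLL ⟨0,h0q⟩ ⟨0,h0q⟩
    rw [bdb_sum_single 0 h0q _ _
        (fun m hm => h12' 0 m.val h0q m.isLt (by omega)), if_pos rfl] at e
    by_cases h1 : 0+1 < q
    · rw [bdb_sum_pair 0 h1 _ _
          (fun m hm1 hm2 => h11' 0 m.val h0q m.isLt (by omega))] at e
      rw [hAe 0 h0q, hBbe 0 h1, hPe 0 h0q]
      linear_combination e
    · rw [bdb_sum_single 0 h0q _ _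
          (fun m hm => h11' 0 m.val h0q m.isLt (by omega))] at e
      rw [hAe 0 h0q, hBb0 0 h1, hPe 0 h0q]
      linear_combination e
  have hM1 : ∀ j, j+1 < q → A (j+1)^2 + Bb (j+1)^2 + R j^2 + P (j+1)^2 = 1 := by
    intro j hj
    have e := hrowLL ⟨j+1,hj⟩ ⟨j+1,hj⟩
    rw [bdb_sum_pair j hj _ _
        (fun m hm1 hm2 => h12' (j+1) m.val hj m.isLt (by omega)), if_pos rfl] at e
    by_cases h2 : j+1+1 < q
    · rw [bdb_sum_pair (j+1) h2 _ _
          (fun m hm1 hm2 => h11' (j+1) m.val hj m.isLt (by omega))] at e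
      rw [hAe (j+1) hj, hBbe (j+1) h2, hRe j hj, hPe (j+1) hj]
      linear_combination e
    · rw [bdb_sum_single (j+1) hj _ _
          (fun m hm => h11' (j+1) m.val hj m.isLt (by omega))] at e
      rw [hAe (j+1) hj, hBb0 (j+1) h2, hRe j hj, hPe (j+1) hj]
      linear_combination e
  have hM2z : G 0^2 + Hh 0^2 + U 0^2 = 1 := by
    have e := hrowRR ⟨0,h0q⟩ ⟨0,h0q⟩
    rw [bdb_sum_single 0 h0q _ _
        (fun m hm => h22' 0 m.val h0q m.isLt (by omega)), if_pos rfl] at e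
    by_cases h1 : 0+1 < q
    · rw [bdb_sum_pair 0 h1 _ _
          (fun m hm1 hm2 => h21' 0 m.val h0q m.isLt (by omega))] at e
      rw [hGe 0 h0q, hHhe 0 h1, hUe 0 h0q]
      linear_combination e
    · rw [bdb_sum_single 0 h0q _ _
          (fun m hm => h21' 0 m.val h0q m.isLt (by omega))] at e
      rw [hGe 0 h0q, hHh0 0 h1, hUe 0 h0q]
      linear_combination e
  have hM2 : ∀ j, j+1 < q → G (j+1)^2 + Hh (j+1)^2 + V j^2 + U (j+1)^2 = 1 := by
    intro j hj
    have e := hrowRR ⟨j+1,hj⟩ ⟨j+1,hj⟩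
    rw [bdb_sum_pair j hj _ _
        (fun m hm1 hm2 => h22' (j+1) m.val hj m.isLt (by omega)), if_pos rfl] at e
    by_cases h2 : j+1+1 < q
    · rw [bdb_sum_pair (j+1) h2 _ _
          (fun m hm1 hm2 => h21' (j+1) m.val hj m.isLt (by omega))] at e
      rw [hGe (j+1) hj, hHhe (j+1) h2, hVe j hj, hUe (j+1) hj]
      linear_combination e
    · rw [bdb_sum_single (j+1) hj _ _
          (fun m hm => h21' (j+1) m.val hj m.isLt (by omega))] at e
      rw [hGe (j+1) hj, hHh0 (j+1) h2, hVe j hj, hUe (j+1) hj]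
      linear_combination e
  have hO2z : A 0*G 0 + Bb 0*Hh 0 + P 0*U 0 = 0 := by
    have e := hrowLR ⟨0,h0q⟩ ⟨0,h0q⟩
    rw [bdb_sum_single 0 h0q _ _
        (fun m hm => h12' 0 m.val h0q m.isLt (by omega))] at e
    by_cases h1 : 0+1 < q
    · rw [bdb_sum_pair 0 h1 _ _
          (fun m hm1 hm2 => h11' 0 m.val h0q m.isLt (by omega))] at e
      rw [hAe 0 h0q, hGe 0 h0q, hBbe 0 h1, hHhe 0 h1, hPe 0 h0q, hUe 0 h0q]
      linear_combination e
    · rw [bdb_sum_single 0 h0q _ _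
          (fun m hm => h11' 0 m.val h0q m.isLt (by omega))] at e
      rw [hAe 0 h0q, hGe 0 h0q, hBb0 0 h1, hPe 0 h0q, hUe 0 h0q]
      linear_combination e
  have hO2 : ∀ j, j+1 < q →
      A (j+1)*G (j+1) + Bb (j+1)*Hh (j+1) + R j*V j + P (j+1)*U (j+1) = 0 := by
    intro j hj
    have e := hrowLR ⟨j+1,hj⟩ ⟨j+1,hj⟩
    rw [bdb_sum_pair j hj _ _
        (fun m hm1 hm2 => h12' (j+1) m.val hj m.isLt (by omega))] at e
    by_cases h2 : j+1+1 < q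
    · rw [bdb_sum_pair (j+1) h2 _ _
          (fun m hm1 hm2 => h11' (j+1) m.val hj m.isLt (by omega))] at e
      rw [hAe (j+1) hj, hGe (j+1) hj, hBbe (j+1) h2, hHhe (j+1) h2, hRe j hj,
        hVe j hj, hPe (j+1) hj, hUe (j+1) hj]
      linear_combination e
    · rw [bdb_sum_single (j+1) hj _ _
          (fun m hm => h11' (j+1) m.val hj m.isLt (by omega))] at e
      rw [hAe (j+1) hj, hGe (j+1) hj, hBb0 (j+1) h2, hHh0 (j+1) h2, hRe j hj,
        hVe j hj, hPe (j+1) hj, hUe (j+1) hj]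
      linear_combination e
  have main := bdb_main A G P U R V Bb Hh q (fun _ => hN1z) hN1 hN2 hO1
    (fun _ => hM1z) hM1 (fun _ => hM2z) hM2 (fun _ => hO2z) hO2
  set θf : Fin q → ℝ := fun t => (bdbRec A G P U R V Bb Hh t.val).th with hθf
  set φf : Fin (q-1) → ℝ := fun t => (bdbRec A G P U R V Bb Hh t.val).ph with hφf
  set D1f : Fin q → ℝ := fun t => (bdbRec A G P U R V Bb Hh t.val).d1 with hD1f
  set D2f : Fin q → ℝ := fun t => (bdbRec A G P U R V Bb Hh t.val).d2 with hD2f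
  set E1f : Fin q → ℝ := fun t => bdbE1 A G P U R V Bb Hh t.val with hE1f
  set E2f : Fin q → ℝ := fun t => (bdbRec A G P U R V Bb Hh t.val).e2 with hE2f
  refine ⟨D1f, D2f, E1f, E2f, θf, φf,
    fun i => bdbRec_d1_cases A G P U R V Bb Hh i.val,
    fun i => bdbRec_d2_cases A G P U R V Bb Hh i.val,
    fun i => bdbE1_cases A G P U R V Bb Hh i.val,
    fun i => bdbRec_e2_cases A G P U R V Bb Hh i.val,
    fun i => bdbRec_th_mem A G P U R V Bb Hh i.val,
    fun i => bdbRec_ph_mem A G P U R V Bb Hh i.val, ?_⟩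
  rw [Matrix.fromBlocks_multiply, Matrix.fromBlocks_multiply]
  apply Matrix.ext
  intro k l
  rcases k with i | i <;> rcases l with j | j
  · -- block 11
    simp only [Matrix.fromBlocks_apply₁₁, Matrix.zero_mul, Matrix.mul_zero,
      add_zero, zero_add, Matrix.mul_diagonal, Matrix.diagonal_mul,
      bdbB11]
    by_cases e1 : (j:ℕ) = (i:ℕ)
    · rw [if_pos e1]
      have hji : j = i := Fin.ext e1
      subst hji
      obtain ⟨m1, -, -, -, -, -, -⟩ := main j.val j.isLt
      rw [bdbCp_eq, hAe j.val j.isLt, Fin.eta] at m1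
      by_cases h0 : 0 < (j:ℕ)
      · rw [if_pos h0] at m1
        rw [dif_pos h0]
        simp only [hθf, hφf, hD1f, hE1f]
        linear_combination m1
      · rw [if_neg h0] at m1
        rw [dif_neg h0]
        simp only [hθf, hD1f, hE1f]
        linear_combination m1
    · rw [if_neg e1]
      by_cases e2 : (j:ℕ) = (i:ℕ)+1
      · rw [dif_pos e2]
        have hiq : (i:ℕ)+1 < q := by have := j.isLt; omega
        obtain ⟨-, -, m3, -, -, -, -⟩ := main i.val i.isLt
        have hb : B₁₁ i j = Bb i.val := by
          rw [hBbe i.val hiq, Fin.eta,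
            show (⟨(i:ℕ)+1, hiq⟩ : Fin q) = j from Fin.ext e2.symm]
        rw [hb]
        simp only [hθf, hφf, hD1f, hE1f]
        rw [show (j:ℕ) = (i:ℕ)+1 from e2, bdbE1_succ]
        linear_combination m3
      · rw [dif_neg e2]
        rw [h11 i j (not_or.2 ⟨e1, e2⟩), mul_zero, zero_mul]
  · -- block 12
    simp only [Matrix.fromBlocks_apply₁₂, Matrix.zero_mul, Matrix.mul_zero,
      add_zero, zero_add, Matrix.mul_diagonal, Matrix.diagonal_mul,
      bdbB12]
    by_cases e1 : (j:ℕ) = (i:ℕ)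
    · rw [if_pos e1]
      have hji : j = i := Fin.ext e1
      subst hji
      obtain ⟨-, -, -, -, m5, -, -⟩ := main j.val j.isLt
      rw [hPe j.val j.isLt, Fin.eta] at m5
      by_cases h0 : (j:ℕ) < q-1
      · rw [dif_pos h0]
        simp only [hθf, hφf, hD1f, hE2f]
        linear_combination m5
      · rw [dif_neg h0]
        have hph0 : (bdbRec A G P U R V Bb Hh j.val).ph = 0 :=
          bdbRec_ph_eq_zero A G P U R V Bb Hh j.val
            (hBb0 j.val (by have := j.isLt; omega)) (hHh0 j.val (by have := j.isLt; omega))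
        rw [hph0, Real.cos_zero] at m5
        simp only [hθf, hD1f, hE2f]
        linear_combination m5
    · rw [if_neg e1]
      by_cases e2 : (i:ℕ) = (j:ℕ)+1
      · rw [dif_pos e2]
        have hjq : (j:ℕ)+1 < q := by have := i.isLt; omega
        obtain ⟨-, -, -, -, -, -, m7⟩ := main i.val i.isLt
        obtain ⟨m7a, -⟩ := m7 j.val e2
        have hb : B₁₂ i j = R j.val := by
          rw [hRe j.val hjq, Fin.eta,
            show (⟨(j:ℕ)+1, hjq⟩ : Fin q) = i from Fin.ext e2.symm]
        rw [hb]
        simp only [hθf, hφf, hD1f, hE2f]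
        linear_combination m7a
      · rw [dif_neg e2]
        rw [h12 i j (not_or.2 ⟨e1, e2⟩), mul_zero, zero_mul]
  · -- block 21
    simp only [Matrix.fromBlocks_apply₂₁, Matrix.zero_mul, Matrix.mul_zero,
      add_zero, zero_add, Matrix.mul_diagonal, Matrix.diagonal_mul,
      bdbB21]
    by_cases e1 : (j:ℕ) = (i:ℕ)
    · rw [if_pos e1]
      have hji : j = i := Fin.ext e1
      subst hji
      obtain ⟨-, m2, -, -, -, -, -⟩ := main j.val j.isLt
      rw [bdbCp_eq, hGe j.val j.isLt, Fin.eta] at m2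
      by_cases h0 : 0 < (j:ℕ)
      · rw [if_pos h0] at m2
        rw [dif_pos h0]
        simp only [hθf, hφf, hD2f, hE1f]
        linear_combination m2
      · rw [if_neg h0] at m2
        rw [dif_neg h0]
        simp only [hθf, hD2f, hE1f]
        linear_combination m2
    · rw [if_neg e1]
      by_cases e2 : (j:ℕ) = (i:ℕ)+1
      · rw [dif_pos e2]
        have hiq : (i:ℕ)+1 < q := by have := j.isLt; omega
        obtain ⟨-, -, -, m4, -, -, -⟩ := main i.val i.isLt
        have hb : B₂₁ i j = Hh i.val := by
          rw [hHhe i.val hiq, Fin.eta,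
            show (⟨(i:ℕ)+1, hiq⟩ : Fin q) = j from Fin.ext e2.symm]
        rw [hb]
        simp only [hθf, hφf, hD2f, hE1f]
        rw [show (j:ℕ) = (i:ℕ)+1 from e2, bdbE1_succ]
        linear_combination m4
      · rw [dif_neg e2]
        rw [h21 i j (not_or.2 ⟨e1, e2⟩), mul_zero, zero_mul]
  · -- block 22
    simp only [Matrix.fromBlocks_apply₂₂, Matrix.zero_mul, Matrix.mul_zero,
      add_zero, zero_add, Matrix.mul_diagonal, Matrix.diagonal_mul,
      bdbB22]
    by_cases e1 : (j:ℕ) = (i:ℕ)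
    · rw [if_pos e1]
      have hji : j = i := Fin.ext e1
      subst hji
      obtain ⟨-, -, -, -, -, m6, -⟩ := main j.val j.isLt
      rw [hUe j.val j.isLt, Fin.eta] at m6
      by_cases h0 : (j:ℕ) < q-1
      · rw [dif_pos h0]
        simp only [hθf, hφf, hD2f, hE2f]
        linear_combination m6
      · rw [dif_neg h0]
        have hph0 : (bdbRec A G P U R V Bb Hh j.val).ph = 0 :=
          bdbRec_ph_eq_zero A G P U R V Bb Hh j.val
            (hBb0 j.val (by have := j.isLt; omega)) (hHh0 j.val (by have := j.isLt; omega))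
        rw [hph0, Real.cos_zero] at m6
        simp only [hθf, hD2f, hE2f]
        linear_combination m6
    · rw [if_neg e1]
      by_cases e2 : (i:ℕ) = (j:ℕ)+1
      · rw [dif_pos e2]
        have hjq : (j:ℕ)+1 < q := by have := i.isLt; omega
        obtain ⟨-, -, -, -, -, -, m7⟩ := main i.val i.isLt
        obtain ⟨-, m7b⟩ := m7 j.val e2
        have hb : B₂₂ i j = V j.val := by
          rw [hVe j.val hjq, Fin.eta,
            show (⟨(j:ℕ)+1, hjq⟩ : Fin q) = i from Fin.ext e2.symm]
        rw [hb]
        simp only [hθf, hφf, hD2f, hE2f]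
        linear_combination m7b
      · rw [dif_neg e2]
        rw [h22 i j (not_or.2 ⟨e1, e2⟩), mul_zero, zero_mul]
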